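/- Let A = [A11 A12; A21 A22] and B = [B11 B12; B21 B22] be square block matrices over a field K with A22 and B22 invertible and A/A22, B/B22 of the same size k×k, and let X be an invertible k×k matrix over K. Define C as the 4×4 block matrix with block rows [0, A12, 0, A11; B21, 0, B22, 0; 0, A22, 0, A21; B11, 0, B12, -X], partitioned so that C11 = 0 (the upper-left k×k block) and C22 is the remaining 3×3 block matrix. Then C22 is invertible and the Schur complement C/C22 equals (A/A22) X⁻¹ (B/B22). -/

import Mathlib

open Matrix

/-- product of two Schur complements through `X⁻¹` is realized by the
block matrix `C` with block rows `[0, A12, 0, A11; B21, 0, B22, 0; 0, A22, 0, A21;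
B11, 0, B12, -X]`: the block `C22` (everything but the upper-left k×k block) is
invertible and the Schur complement `C/C22 = 0 - C12 C22⁻¹ C21` equals
`(A/A22) X⁻¹ (B/B22)`. -/
theorem stmt1 (K : Type*) [Field K] (k a b : ℕ)
    (A11 : Matrix (Fin k) (Fin k) K) (A12 : Matrix (Fin k) (Fin a) K)
    (A21 : Matrix (Fin a) (Fin k) K) (A22 : Matrix (Fin a) (Fin a) K)
    (B11 : Matrix (Fin k) (Fin k) K) (B12 : Matrix (Fin k) (Fin b) K)
    (B21 : Matrix (Fin b) (Fin k) K) (B22 : Matrix (Fin b) (Fin b) K)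
    (X : Matrix (Fin k) (Fin k) K)
    (hA22 : IsUnit A22) (hB22 : IsUnit B22) (hX : IsUnit X) :
    let C12 : Matrix (Fin k) (Fin a ⊕ (Fin b ⊕ Fin k)) K := Matrix.of fun i j =>
      match j with
      | .inl ja => A12 i ja
      | .inr (.inl _) => 0
      | .inr (.inr jk) => A11 i jk
    let C21 : Matrix (Fin b ⊕ (Fin a ⊕ Fin k)) (Fin k) K := Matrix.of fun i j =>
      match i with
      | .inl ib => B21 ib j
      | .inr (.inl _) => 0
      | .inr (.inr ik) => B11 ik j
    let C22 : Matrix (Fin b ⊕ (Fin a ⊕ Fin k)) (Fin a ⊕ (Fin b ⊕ Fin k)) K :=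
      Matrix.of fun i j =>
      match i, j with
      | .inl ib, .inr (.inl jb) => B22 ib jb
      | .inl _, _ => 0
      | .inr (.inl ia), .inl ja => A22 ia ja
      | .inr (.inl ia), .inr (.inr jk) => A21 ia jk
      | .inr (.inl _), _ => 0
      | .inr (.inr ik), .inr (.inl jb) => B12 ik jb
      | .inr (.inr ik), .inr (.inr jk) => -X ik jk
      | .inr (.inr _), _ => 0
    ∃ W : Matrix (Fin a ⊕ (Fin b ⊕ Fin k)) (Fin b ⊕ (Fin a ⊕ Fin k)) K,
      C22 * W = 1 ∧ W * C22 = 1 ∧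
      (0 : Matrix (Fin k) (Fin k) K) - C12 * W * C21
        = (A11 - A12 * A22⁻¹ * A21) * X⁻¹ * (B11 - B12 * B22⁻¹ * B21) := by
  intro C12 C21 C22
  have hA : A22 * A22⁻¹ = 1 := mul_nonsing_inv _ ((isUnit_iff_isUnit_det _).mp hA22)
  have hA' : A22⁻¹ * A22 = 1 := nonsing_inv_mul _ ((isUnit_iff_isUnit_det _).mp hA22)
  have hB : B22 * B22⁻¹ = 1 := mul_nonsing_inv _ ((isUnit_iff_isUnit_det _).mp hB22)
  have hB' : B22⁻¹ * B22 = 1 := nonsing_inv_mul _ ((isUnit_iff_isUnit_det _).mp hB22)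
  have hX1 : X * X⁻¹ = 1 := mul_nonsing_inv _ ((isUnit_iff_isUnit_det _).mp hX)
  have hX1' : X⁻¹ * X = 1 := nonsing_inv_mul _ ((isUnit_iff_isUnit_det _).mp hX)
  refine ⟨fromBlocks (-(A22⁻¹ * A21 * X⁻¹ * B12 * B22⁻¹))
      (fromCols A22⁻¹ (A22⁻¹ * A21 * X⁻¹))
      (fromRows B22⁻¹ (X⁻¹ * B12 * B22⁻¹))
      (fromBlocks 0 0 0 (-X⁻¹)), ?_, ?_, ?_⟩
  · rw [show C22 = fromBlocks 0 (fromCols B22 0) (fromRows A22 0)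
        (fromBlocks 0 A21 B12 (-X)) by ext (i | i | i) (j | j | j) <;> rfl]
    rw [show (1 : Matrix (Fin b ⊕ (Fin a ⊕ Fin k)) (Fin b ⊕ (Fin a ⊕ Fin k)) K)
        = fromBlocks 1 0 (fromRows 0 0) (fromBlocks 1 0 0 1) by
      simp [← fromBlocks_one, fromRows_zero]]
    simp only [fromBlocks_multiply, fromCols_mul_fromRows, fromCols_mul_fromBlocks,
      fromBlocks_mul_fromRows, fromRows_mul_fromCols, fromRows_mul, mul_fromCols,
      Matrix.zero_mul, Matrix.mul_zero, add_zero, zero_add, Matrix.mul_neg, Matrix.neg_mul,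
      neg_neg, hB, hA, hX1]
    rw [fromCols_fromRows_eq_fromBlocks]
    simp only [← Matrix.mul_assoc, hA, hX1, Matrix.one_mul]
    ext (i | i | i) (j | j | j) <;> simp [Matrix.one_apply]
  · rw [show C22 = fromBlocks 0 (fromCols B22 0) (fromRows A22 0)
        (fromBlocks 0 A21 B12 (-X)) by ext (i | i | i) (j | j | j) <;> rfl]
    rw [show (1 : Matrix (Fin a ⊕ (Fin b ⊕ Fin k)) (Fin a ⊕ (Fin b ⊕ Fin k)) K)
        = fromBlocks 1 (fromCols 0 0) (fromRows 0 0) (fromBlocks 1 0 0 1) by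
      simp [← fromBlocks_one, fromRows_zero, fromCols_zero]]
    simp only [fromBlocks_multiply, fromCols_mul_fromRows, fromCols_mul_fromBlocks,
      fromBlocks_mul_fromRows, fromRows_mul_fromCols, fromRows_mul, mul_fromCols,
      Matrix.zero_mul, Matrix.mul_zero, add_zero, zero_add, Matrix.mul_neg, Matrix.neg_mul,
      neg_neg, hB', hA', hX1']
    simp only [nonsing_inv_mul_cancel_right _ _ ((isUnit_iff_isUnit_det _).mp hB22),
      nonsing_inv_mul_cancel_right _ _ ((isUnit_iff_isUnit_det _).mp hX)]
    ext (i | i | i) (j | j | j) <;> simp [Matrix.one_apply]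
  · rw [show C12 = fromCols A12 (fromCols 0 A11) by
        ext i (j | j | j) <;> rfl,
      show C21 = fromRows B21 (fromRows 0 B11) by
        ext (i | i | i) j <;> rfl]
    simp only [fromCols_mul_fromBlocks, fromCols_mul_fromRows,
      fromRows_mul_fromCols, fromBlocks_mul_fromRows, mul_fromCols, fromRows_mul,
      Matrix.zero_mul, Matrix.mul_zero, add_zero, zero_add, Matrix.mul_neg, Matrix.neg_mul,
      neg_neg, Matrix.add_mul, Matrix.sub_mul, Matrix.mul_sub]
    simp only [← Matrix.mul_assoc]
    abel
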